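/- Let ℓ < i be real numbers, let ρ : [ℓ, i] → (0,∞) be continuous, and let H : [ℓ, i] → (0,∞) be continuously differentiable with H' > 0 on [ℓ, i]. Then ∫_ℓ^i ρ(z) H(z) e^{H(z)} / H'(z) dz ≥ ( ∫_ℓ^i √(ρ(z)) dz )² / ( φ(H(ℓ)) − φ(H(i)) ). -/

import Mathlib

open MeasureTheory Set

private lemma aux_int {a : ℝ} (ha : 0 < a) :
    MeasureTheory.IntegrableOn (fun u : ℝ => 1 / (u * Real.exp u)) (Set.Ioi a) := by
  have hmeas : Measurable fun u : ℝ => 1 / (u * Real.exp u) := by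
    simp_rw [one_div]
    exact (measurable_id.mul Real.measurable_exp).inv
  have hint : MeasureTheory.IntegrableOn (fun x : ℝ => Real.exp (-1 * x)) (Set.Ioi a) :=
    exp_neg_integrableOn_Ioi a one_pos
  simp only [neg_mul, one_mul] at hint
  refine MeasureTheory.Integrable.mono' (hint.const_mul (1 / a)) hmeas.aestronglyMeasurable ?_
  refine (MeasureTheory.ae_restrict_iff' measurableSet_Ioi).2 (Filter.Eventually.of_forall ?_)
  intro u hu
  have hau : a < u := hu
  have hu0 : 0 < u := ha.trans hau
  rw [Real.norm_of_nonneg (by positivity)]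
  have h1 : (1 : ℝ) / (u * Real.exp u) = (1 / u) * Real.exp (-u) := by
    rw [Real.exp_neg]; field_simp
  rw [h1]
  have h2 : (1 : ℝ) / u ≤ 1 / a := one_div_le_one_div_of_le ha hau.le
  exact mul_le_mul_of_nonneg_right h2 (Real.exp_pos _).le

/- STATEMENT 13: Let ℓ < i, ρ : [ℓ, i] → (0,∞) continuous, H : [ℓ, i] → (0,∞)
continuously differentiable with H' > 0. Then
∫_ℓ^i ρ H e^H / H' dz ≥ ( ∫_ℓ^i √ρ dz )² / ( φ(H(ℓ)) − φ(H(i)) ),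
where φ(x) = ∫_x^∞ 1/(u e^u) du. -/
theorem stmt_13
    (φ : ℝ → ℝ) (hφ : ∀ x : ℝ, φ x = ∫ u in Set.Ioi x, 1 / (u * Real.exp u))
    (ℓ i : ℝ) (hℓi : ℓ < i) (ρ H H' : ℝ → ℝ)
    (hρc : ContinuousOn ρ (Set.Icc ℓ i))
    (hρpos : ∀ z ∈ Set.Icc ℓ i, 0 < ρ z)
    (hH : ∀ z ∈ Set.Icc ℓ i, HasDerivWithinAt H (H' z) (Set.Icc ℓ i) z)
    (hH'c : ContinuousOn H' (Set.Icc ℓ i))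
    (hHpos : ∀ z ∈ Set.Icc ℓ i, 0 < H z)
    (hH'pos : ∀ z ∈ Set.Icc ℓ i, 0 < H' z) :
    (∫ z in ℓ..i, Real.sqrt (ρ z)) ^ 2 / (φ (H ℓ) - φ (H i)) ≤
      ∫ z in ℓ..i, ρ z * H z * Real.exp (H z) / H' z := by
  have hle : ℓ ≤ i := hℓi.le
  have hIcc : Set.uIcc ℓ i = Set.Icc ℓ i := Set.uIcc_of_le hle
  have hHc : ContinuousOn H (Set.Icc ℓ i) := fun z hz => (hH z hz).continuousWithinAt
  -- f and g for Cauchy-Schwarz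
  set f : ℝ → ℝ := fun z => Real.sqrt (ρ z * H z * Real.exp (H z) / H' z) with hfdef
  set g : ℝ → ℝ := fun z => Real.sqrt (H' z / (H z * Real.exp (H z))) with hgdef
  have hfg : ∀ z ∈ Set.Icc ℓ i, f z * g z = Real.sqrt (ρ z) := by
    intro z hz
    have h1 := hρpos z hz; have h2 := hHpos z hz; have h3 := hH'pos z hz
    have h4 := Real.exp_pos (H z)
    rw [hfdef, hgdef]
    simp only
    rw [← Real.sqrt_mul (by positivity)]
    congr 1
    field_simp
  have hf2 : ∀ z ∈ Set.Icc ℓ i, f z ^ 2 = ρ z * H z * Real.exp (H z) / H' z := by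
    intro z hz
    have h1 := hρpos z hz; have h2 := hHpos z hz; have h3 := hH'pos z hz
    have h4 := Real.exp_pos (H z)
    exact Real.sq_sqrt (by positivity)
  have hg2 : ∀ z ∈ Set.Icc ℓ i, g z ^ 2 = H' z / (H z * Real.exp (H z)) := by
    intro z hz
    have h2 := hHpos z hz; have h3 := hH'pos z hz
    have h4 := Real.exp_pos (H z)
    exact Real.sq_sqrt (by positivity)
  -- continuity of f, g
  have hcF : ContinuousOn (fun z => ρ z * H z * Real.exp (H z) / H' z) (Set.Icc ℓ i) :=
    ((hρc.mul hHc).mul (Real.continuous_exp.comp_continuousOn hHc)).div hH'c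
      (fun z hz => (hH'pos z hz).ne')
  have hcG : ContinuousOn (fun z => H' z / (H z * Real.exp (H z))) (Set.Icc ℓ i) :=
    hH'c.div (hHc.mul (Real.continuous_exp.comp_continuousOn hHc))
      (fun z hz => (mul_pos (hHpos z hz) (Real.exp_pos _)).ne')
  have hfc : ContinuousOn f (Set.Icc ℓ i) := Real.continuous_sqrt.comp_continuousOn hcF
  have hgc : ContinuousOn g (Set.Icc ℓ i) := Real.continuous_sqrt.comp_continuousOn hcG
  -- H is strictly monotone, so H ℓ < H i
  have hmono : StrictMonoOn H (Set.Icc ℓ i) := by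
    refine strictMonoOn_of_hasDerivWithinAt_pos (f' := H') (convex_Icc ℓ i) hHc ?_ ?_
    · intro x hx
      rw [interior_Icc] at hx ⊢
      exact (hH x (Set.Ioo_subset_Icc_self hx)).mono Set.Ioo_subset_Icc_self
    · intro x hx
      rw [interior_Icc] at hx
      exact hH'pos x (Set.Ioo_subset_Icc_self hx)
  have hℓS : ℓ ∈ Set.Icc ℓ i := Set.left_mem_Icc.2 hle
  have hiS : i ∈ Set.Icc ℓ i := Set.right_mem_Icc.2 hle
  have hHlHi : H ℓ < H i := hmono hℓS hiS hℓi
  have hHl0 : 0 < H ℓ := hHpos ℓ hℓS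
  -- φ difference as an interval integral
  have hφdiff : φ (H ℓ) - φ (H i) = ∫ u in (H ℓ)..(H i), 1 / (u * Real.exp u) := by
    have hsplit : (∫ u in Set.Ioi (H ℓ), 1 / (u * Real.exp u)) =
        (∫ u in Set.Ioc (H ℓ) (H i), 1 / (u * Real.exp u)) +
          ∫ u in Set.Ioi (H i), 1 / (u * Real.exp u) := by
      rw [← MeasureTheory.setIntegral_union (Set.Ioc_disjoint_Ioi le_rfl) measurableSet_Ioi
        ((aux_int hHl0).mono_set Set.Ioc_subset_Ioi_self)
        ((aux_int hHl0).mono_set (Set.Ioi_subset_Ioi hHlHi.le)),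
        Set.Ioc_union_Ioi_eq_Ioi hHlHi.le]
    rw [hφ, hφ, hsplit, intervalIntegral.integral_of_le hHlHi.le]
    exact add_sub_cancel_right _ _
  -- substitution u = H z
  have hsub : (∫ u in (H ℓ)..(H i), 1 / (u * Real.exp u)) =
      ∫ z in ℓ..i, H' z / (H z * Real.exp (H z)) := by
    have himg : ContinuousOn (fun u : ℝ => 1 / (u * Real.exp u)) (H '' Set.uIcc ℓ i) := by
      refine ContinuousOn.div continuousOn_const
        (continuousOn_id.mul Real.continuous_exp.continuousOn) ?_
      rintro u ⟨z, hz, rfl⟩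
      rw [hIcc] at hz
      exact (mul_pos (hHpos z hz) (Real.exp_pos _)).ne'
    have hderiv : ∀ x ∈ Set.Ioo (min ℓ i) (max ℓ i), HasDerivWithinAt H (H' x) (Set.Ioi x) x := by
      intro x hx
      rw [min_eq_left hle, max_eq_right hle] at hx
      exact (((hH x (Set.Ioo_subset_Icc_self hx)).hasDerivAt
        (Icc_mem_nhds hx.1 hx.2)).hasDerivWithinAt)
    have := intervalIntegral.integral_comp_smul_deriv'' (f := H) (f' := H')
      (g := fun u : ℝ => 1 / (u * Real.exp u)) (hIcc ▸ hHc) hderiv (hIcc ▸ hH'c) himg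
    rw [← this]
    refine intervalIntegral.integral_congr (fun z hz => ?_)
    simp only [smul_eq_mul, Function.comp]
    rw [mul_one_div]
  -- the measure
  set μ : MeasureTheory.Measure ℝ := MeasureTheory.volume.restrict (Set.Ioc ℓ i) with hμ
  haveI : MeasureTheory.IsFiniteMeasure μ := by
    constructor
    rw [hμ, MeasureTheory.Measure.restrict_apply_univ]
    exact measure_Ioc_lt_top
  have hressub : μ ≤ MeasureTheory.volume.restrict (Set.Icc ℓ i) :=
    MeasureTheory.Measure.restrict_mono Set.Ioc_subset_Icc_self le_rfl
  -- Memℒp facts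
  have memf : MeasureTheory.MemLp f (ENNReal.ofReal 2) μ := by
    obtain ⟨C, hC⟩ := (isCompact_Icc).exists_bound_of_continuousOn hfc
    refine MeasureTheory.MemLp.of_bound
      ((hfc.aestronglyMeasurable measurableSet_Icc).mono_measure hressub) C ?_
    rw [hμ]
    exact (MeasureTheory.ae_restrict_iff' measurableSet_Ioc).2
      (Filter.Eventually.of_forall fun x hx => hC x (Set.Ioc_subset_Icc_self hx))
  have memg : MeasureTheory.MemLp g (ENNReal.ofReal 2) μ := by
    obtain ⟨C, hC⟩ := (isCompact_Icc).exists_bound_of_continuousOn hgc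
    refine MeasureTheory.MemLp.of_bound
      ((hgc.aestronglyMeasurable measurableSet_Icc).mono_measure hressub) C ?_
    rw [hμ]
    exact (MeasureTheory.ae_restrict_iff' measurableSet_Ioc).2
      (Filter.Eventually.of_forall fun x hx => hC x (Set.Ioc_subset_Icc_self hx))
  have hfnn : 0 ≤ᵐ[μ] f := Filter.Eventually.of_forall fun x => Real.sqrt_nonneg _
  have hgnn : 0 ≤ᵐ[μ] g := Filter.Eventually.of_forall fun x => Real.sqrt_nonneg _
  have hpq : Real.HolderConjugate 2 2 := Real.holderConjugate_iff.mpr ⟨one_lt_two, by norm_num⟩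
  have holder := MeasureTheory.integral_mul_le_Lp_mul_Lq_of_nonneg hpq hfnn hgnn memf memg
  -- identify the three integrals
  have hA : (∫ a, f a * g a ∂μ) = ∫ z in ℓ..i, Real.sqrt (ρ z) := by
    rw [intervalIntegral.integral_of_le hle, hμ]
    exact MeasureTheory.setIntegral_congr_fun measurableSet_Ioc
      (fun z hz => hfg z (Set.Ioc_subset_Icc_self hz))
  have hB : (∫ a, f a ^ (2:ℝ) ∂μ) = ∫ z in ℓ..i, ρ z * H z * Real.exp (H z) / H' z := by
    rw [intervalIntegral.integral_of_le hle, hμ]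
    refine MeasureTheory.setIntegral_congr_fun measurableSet_Ioc (fun z hz => ?_)
    rw [show ((2:ℝ)) = ((2:ℕ):ℝ) by norm_num, Real.rpow_natCast]
    exact hf2 z (Set.Ioc_subset_Icc_self hz)
  have hD : (∫ a, g a ^ (2:ℝ) ∂μ) = φ (H ℓ) - φ (H i) := by
    rw [hφdiff, hsub, intervalIntegral.integral_of_le hle, hμ]
    refine MeasureTheory.setIntegral_congr_fun measurableSet_Ioc (fun z hz => ?_)
    rw [show ((2:ℝ)) = ((2:ℕ):ℝ) by norm_num, Real.rpow_natCast]
    exact hg2 z (Set.Ioc_subset_Icc_self hz)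
  set A := ∫ z in ℓ..i, Real.sqrt (ρ z) with hAdef
  set B := ∫ z in ℓ..i, ρ z * H z * Real.exp (H z) / H' z with hBdef
  set D := φ (H ℓ) - φ (H i) with hDdef
  rw [hA, hB, hD] at holder
  -- positivity of D
  have hDpos : 0 < D := by
    rw [hφdiff, hsub]
    refine intervalIntegral.intervalIntegral_pos_of_pos_on
      ((hcG.mono (hIcc ▸ Set.Subset.rfl)).intervalIntegrable_of_Icc hle) ?_ hℓi
    intro x hx
    have hx' : x ∈ Set.Icc ℓ i := Set.Ioo_subset_Icc_self hx
    exact div_pos (hH'pos x hx') (mul_pos (hHpos x hx') (Real.exp_pos _))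
  have hBnn : 0 ≤ B := by
    rw [hBdef]
    refine intervalIntegral.integral_nonneg hle (fun x hx => ?_)
    have h1 := hρpos x hx; have h2 := hHpos x hx; have h3 := hH'pos x hx
    positivity
  have hAnn : 0 ≤ A := by
    rw [hAdef]
    exact intervalIntegral.integral_nonneg hle (fun x hx => Real.sqrt_nonneg _)
  -- conclude
  rw [div_le_iff₀ hDpos]
  calc A ^ 2 ≤ (B ^ ((1:ℝ)/2) * D ^ ((1:ℝ)/2)) ^ 2 := by
        apply pow_le_pow_left₀ hAnn holder
      _ = B * D := by
        rw [mul_pow, ← Real.rpow_natCast (B ^ ((1:ℝ)/2)) 2, ← Real.rpow_natCast (D ^ ((1:ℝ)/2)) 2,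
          ← Real.rpow_mul hBnn, ← Real.rpow_mul hDpos.le]
        norm_num
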